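/- Let X be a real inner product space, x, y ∈ X and 0 < m < M. If ⟨M•y − x, x − m•y⟩ ≥ 0, then 0 ≤ ‖x‖²·‖y‖² − ⟨x,y⟩² ≤ (1/4)·((M − m)²/(M·m))·⟨x,y⟩². -/
import Mathlib


open scoped RealInnerProductSpace

theorem reverse_cbs_real_squared {X : Type*} [NormedAddCommGroup X]
    [InnerProductSpace ℝ X] (x y : X) (m M : ℝ) (hm : 0 < m) (hmM : m < M)
    (h : 0 ≤ ⟪M • y - x, x - m • y⟫) :
    0 ≤ ‖x‖ ^ 2 * ‖y‖ ^ 2 - ⟪x, y⟫ ^ 2 ∧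
      ‖x‖ ^ 2 * ‖y‖ ^ 2 - ⟪x, y⟫ ^ 2 ≤
        (1 / 4) * ((M - m) ^ 2 / (M * m)) * ⟪x, y⟫ ^ 2 := by
  have hM : (0:ℝ) < M := hm.trans hmM
  have hcs : ⟪x, y⟫ ^ 2 ≤ ‖x‖ ^ 2 * ‖y‖ ^ 2 := by
    have := abs_real_inner_le_norm x y
    nlinarith [abs_nonneg ⟪x, y⟫, sq_abs ⟪x, y⟫, norm_nonneg x, norm_nonneg y]
  have hexp : 0 ≤ M * ⟪x, y⟫ - M * m * ‖y‖ ^ 2 - ‖x‖ ^ 2 + m * ⟪x, y⟫ := by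
    have he : ⟪M • y - x, x - m • y⟫ =
        M * ⟪x, y⟫ - M * m * ⟪y, y⟫ - ⟪x, x⟫ + m * ⟪x, y⟫ := by
      simp [inner_sub_left, inner_sub_right, real_inner_smul_left,
        real_inner_smul_right, real_inner_comm y x]
      ring
    rw [he, real_inner_self_eq_norm_sq, real_inner_self_eq_norm_sq] at h
    simpa [pow_two] using h
  have hkey : ‖x‖ ^ 2 + M * m * ‖y‖ ^ 2 ≤ (M + m) * ⟪x, y⟫ := by linarith
  have hp : 0 ≤ ⟪x, y⟫ := by
    by_contra hneg
    push_neg at hneg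
    nlinarith [sq_nonneg ‖x‖, sq_nonneg ‖y‖,
      mul_nonneg (mul_nonneg hM.le hm.le) (sq_nonneg ‖y‖)]
  refine ⟨by linarith, ?_⟩
  have hMm : (0:ℝ) < M * m := by positivity
  rw [show (1/4) * ((M - m)^2/(M*m)) * ⟪x,y⟫^2
      = ((M - m)^2 * ⟪x,y⟫^2 / 4) / (M*m) by ring, le_div_iff₀ hMm]
  nlinarith [sq_nonneg (‖x‖ ^ 2 - M * m * ‖y‖ ^ 2),
    mul_le_mul hkey hkey (by positivity) (by positivity : (0:ℝ) ≤ (M + m) * ⟪x, y⟫)]
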